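/- Let d ≥ 1, a > 0, and let K : ℝ^d × ℝ^d → ℝ≥0 satisfy K(z, z') ≤ C t^{-d/2} exp(-|z - z'|²/(C t)) and the invariance property ∫ K(z, z') χ(z') dz' = χ(z) for all z, where χ : ℝ^d → ℝ satisfies |χ - 1| ∈ Lᵖ(ℝ^d) for some p > 1. Then |∫ K(z, z') dz' - χ(z)| ≤ C' t^{-d/(2p)} ‖χ - 1‖_{Lᵖ} for a constant C' = C'(C, d, p). -/

import Mathlib

open MeasureTheory Real

lemma aux_gauss_integrable {d : ℕ} {b : ℝ} (hb : 0 < b) :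
    Integrable (fun v : EuclideanSpace ℝ (Fin d) => Real.exp (-b * ‖v‖ ^ 2)) := by
  have h := GaussianFourier.integrable_cexp_neg_mul_sq_norm_add
    (V := EuclideanSpace ℝ (Fin d)) (b := (b : ℂ)) (by simpa using hb) 0 0
  refine h.norm.congr (Filter.Eventually.of_forall fun v => ?_)
  simp [Complex.norm_exp]
  left; norm_cast

lemma aux_gauss_eval {d : ℕ} {b : ℝ} (hb : 0 < b) (z : EuclideanSpace ℝ (Fin d)) :
    (∫ w : EuclideanSpace ℝ (Fin d), Real.exp (-b * ‖z - w‖ ^ 2)) = (π / b) ^ ((d:ℝ)/2) := by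
  rw [integral_sub_left_eq_self (fun w => Real.exp (-b * ‖w‖ ^ 2)) volume z,
    GaussianFourier.integral_rexp_neg_mul_sq_norm hb]
  norm_num [finrank_euclideanSpace_fin]

lemma aux_exp_rpow (a q : ℝ) : Real.exp a ^ q = Real.exp (a * q) := by
  rw [Real.rpow_def_of_pos (Real.exp_pos a), Real.log_exp]

theorem stmt13 (d : ℕ) (hd : 1 ≤ d) (C : ℝ) (hC : 0 < C) (p : ℝ) (hp : 1 < p) :
    ∃ C' : ℝ, 0 < C' ∧ ∀ t : ℝ, 0 < t →
      ∀ K : EuclideanSpace ℝ (Fin d) → EuclideanSpace ℝ (Fin d) → ℝ,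
      ∀ χ : EuclideanSpace ℝ (Fin d) → ℝ,
      (∀ z, Measurable (K z)) → Measurable χ →
      (∀ z z', 0 ≤ K z z') →
      (∀ z z', K z z' ≤ C * t ^ (-(d : ℝ) / 2) * Real.exp (-‖z - z'‖ ^ 2 / (C * t))) →
      (∀ z, (∫ z', K z z' * χ z') = χ z) →
      MemLp (fun z => χ z - 1) (ENNReal.ofReal p) →
      ∀ z, |(∫ z', K z z') - χ z| ≤
        C' * t ^ (-(d : ℝ) / (2 * p)) *
          (eLpNorm (fun z => χ z - 1) (ENNReal.ofReal p) volume).toReal := by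
  have hp0 : 0 < p := lt_trans one_pos hp
  set q : ℝ := p / (p - 1) with hqdef
  have hpq : p.HolderConjugate q := Real.HolderConjugate.conjExponent hp
  have hq0 : 0 < q := hpq.symm.pos
  refine ⟨C * (π * C / q) ^ ((d : ℝ) / (2 * q)), by positivity, ?_⟩
  intro t ht K χ hKm hχm hK0 hKb hinv hχp z
  set N := (eLpNorm (fun z => χ z - 1) (ENNReal.ofReal p) volume).toReal with hN
  have hN0 : 0 ≤ N := ENNReal.toReal_nonneg
  have hq'0 : (ENNReal.ofReal q) ≠ 0 := (ENNReal.ofReal_pos.mpr hq0).ne'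
  have hq't : (ENNReal.ofReal q) ≠ ⊤ := ENNReal.ofReal_ne_top
  have htoq : (ENNReal.ofReal q).toReal = q := ENNReal.toReal_ofReal hq0.le
  have hp'0 : (ENNReal.ofReal p) ≠ 0 := (ENNReal.ofReal_pos.mpr hp0).ne'
  have hp't : (ENNReal.ofReal p) ≠ ⊤ := ENNReal.ofReal_ne_top
  have htop : (ENNReal.ofReal p).toReal = p := ENNReal.toReal_ofReal hp0.le
  -- Gaussian bound function
  set g : EuclideanSpace ℝ (Fin d) → ℝ :=
    fun w => C * t ^ (-(d:ℝ)/2) * Real.exp (-‖z - w‖ ^ 2 / (C * t)) with hgdef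
  have hg0 : ∀ w, 0 ≤ g w := fun w => by positivity
  have hgK : ∀ w, K z w ≤ g w := fun w => hKb z w
  have hKsm : AEStronglyMeasurable (K z) volume := (hKm z).aestronglyMeasurable
  -- rewriting of the exponent
  have hexp : ∀ (b : ℝ) (w : EuclideanSpace ℝ (Fin d)),
      Real.exp (-‖z - w‖ ^ 2 / b) = Real.exp (-(1/b) * ‖z - w‖ ^ 2) := by
    intro b w; congr 1; ring
  -- integrability of g
  have hgint : Integrable g volume := by
    have h1 : Integrable (fun w : EuclideanSpace ℝ (Fin d) =>
        Real.exp (-(1/(C*t)) * ‖z - w‖ ^ 2)) volume :=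
      (aux_gauss_integrable (by positivity)).comp_sub_left z
    refine (h1.const_mul (C * t ^ (-(d:ℝ)/2))).congr
      (Filter.Eventually.of_forall fun w => ?_)
    simp only [hgdef, hexp]
  have hKint : Integrable (K z) volume := by
    refine hgint.mono' hKsm (Filter.Eventually.of_forall fun w => ?_)
    rw [Real.norm_of_nonneg (hK0 z w)]; exact hgK w
  -- g ∈ L^q
  have hgcont : Continuous g := by
    have h2 : Continuous fun w : EuclideanSpace ℝ (Fin d) => -‖z - w‖ ^ 2 / (C * t) := by
      fun_prop
    exact continuous_const.mul (Real.continuous_exp.comp h2)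
  have hgpow : ∀ w, g w ^ q =
      (C * t ^ (-(d:ℝ)/2)) ^ q * Real.exp (-(q/(C*t)) * ‖z - w‖ ^ 2) := by
    intro w
    rw [hgdef]
    simp only
    rw [Real.mul_rpow (by positivity) (Real.exp_nonneg _), aux_exp_rpow]
    congr 2
    field_simp
  have hgq : MemLp g (ENNReal.ofReal q) volume := by
    rw [← memLp_norm_rpow_iff hgcont.aestronglyMeasurable hq'0 hq't,
      ENNReal.div_self hq'0 hq't, memLp_one_iff_integrable, htoq]
    have h1 : Integrable (fun w : EuclideanSpace ℝ (Fin d) =>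
        (C * t ^ (-(d:ℝ)/2)) ^ q * Real.exp (-(q/(C*t)) * ‖z - w‖ ^ 2)) volume :=
      ((aux_gauss_integrable (by positivity)).comp_sub_left z).const_mul _
    refine h1.congr (Filter.Eventually.of_forall fun w => ?_)
    show (C * t ^ (-(d:ℝ)/2)) ^ q * Real.exp (-(q/(C*t)) * ‖z - w‖ ^ 2) = ‖g w‖ ^ q
    rw [Real.norm_of_nonneg (hg0 w), hgpow w]
  have hKq : MemLp (K z) (ENNReal.ofReal q) volume := by
    refine hgq.of_le hKsm (Filter.Eventually.of_forall fun w => ?_)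
    rw [Real.norm_of_nonneg (hK0 z w), Real.norm_of_nonneg (hg0 w)]
    exact hgK w
  -- integrability of K * (χ - 1)
  have hmul : Integrable (fun w => K z w * (χ w - 1)) volume := by
    rw [← memLp_one_iff_integrable]
    have h1 : (1 : ENNReal)/1 = 1/(ENNReal.ofReal q) + 1/(ENNReal.ofReal p) := by
      simp only [one_div, inv_one]
      exact (hpq.symm.inv_add_inv_ennreal).symm
    haveI : ENNReal.HolderTriple (ENNReal.ofReal q) (ENNReal.ofReal p) 1 := ⟨by simpa [one_div] using h1.symm⟩
    exact hχp.smul (𝕜 := ℝ) hKq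
  have hmulχ : Integrable (fun w => K z w * χ w) volume := by
    refine (hmul.add hKint).congr (Filter.Eventually.of_forall fun w => ?_)
    simp only [Pi.add_apply]
    ring
  -- main identity
  have key : (∫ w, K z w) - χ z = - ∫ w, K z w * (χ w - 1) := by
    rw [← hinv z, ← integral_neg, ← integral_sub hKint hmulχ]
    congr 1; funext w; ring
  -- Hölder
  have holder : ∫ w, ‖K z w‖ * ‖χ w - 1‖ ≤
      (∫ w, ‖K z w‖ ^ q) ^ (1/q) * (∫ w, ‖χ w - 1‖ ^ p) ^ (1/p) :=
    integral_mul_norm_le_Lp_mul_Lq (μ := volume) hpq.symm hKq hχp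
  -- the Lp norm term
  have hB : (∫ w, ‖χ w - 1‖ ^ p) ^ (1/p) = N := by
    rw [hN, hχp.eLpNorm_eq_integral_rpow_norm hp'0 hp't, htop,
      ENNReal.toReal_ofReal (Real.rpow_nonneg
        (integral_nonneg fun w => Real.rpow_nonneg (norm_nonneg _) _) _), one_div]
  -- the kernel Lq norm bound
  have hA1 : (∫ w, ‖K z w‖ ^ q) ≤
      (C * t ^ (-(d:ℝ)/2)) ^ q * (π * C * t / q) ^ ((d:ℝ)/2) := by
    have hint2 : Integrable (fun w : EuclideanSpace ℝ (Fin d) =>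
        (C * t ^ (-(d:ℝ)/2)) ^ q * Real.exp (-(q/(C*t)) * ‖z - w‖ ^ 2)) volume :=
      ((aux_gauss_integrable (by positivity)).comp_sub_left z).const_mul _
    have hint1 : Integrable (fun w => ‖K z w‖ ^ q) volume := by
      have := hKq.integrable_norm_rpow hq'0 hq't
      rwa [htoq] at this
    have hle : ∀ w, ‖K z w‖ ^ q ≤
        (C * t ^ (-(d:ℝ)/2)) ^ q * Real.exp (-(q/(C*t)) * ‖z - w‖ ^ 2) := by
      intro w
      rw [Real.norm_of_nonneg (hK0 z w), ← hgpow w]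
      exact Real.rpow_le_rpow (hK0 z w) (hgK w) hq0.le
    calc (∫ w, ‖K z w‖ ^ q) ≤
        ∫ w, (C * t ^ (-(d:ℝ)/2)) ^ q * Real.exp (-(q/(C*t)) * ‖z - w‖ ^ 2) :=
          integral_mono hint1 hint2 hle
      _ = (C * t ^ (-(d:ℝ)/2)) ^ q * ∫ w, Real.exp (-(q/(C*t)) * ‖z - w‖ ^ 2) := by
          rw [integral_const_mul]
      _ = (C * t ^ (-(d:ℝ)/2)) ^ q * (π * C * t / q) ^ ((d:ℝ)/2) := by
          rw [aux_gauss_eval (by positivity) z]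
          congr 2
          field_simp
  have hA : (∫ w, ‖K z w‖ ^ q) ^ (1/q) ≤
      C * (π * C / q) ^ ((d : ℝ) / (2 * q)) * t ^ (-(d:ℝ)/(2*p)) := by
    have h0 : (0:ℝ) ≤ ∫ w, ‖K z w‖ ^ q :=
      integral_nonneg fun w => Real.rpow_nonneg (norm_nonneg _) _
    have hCt : (0:ℝ) < C * t ^ (-(d:ℝ)/2) := by positivity
    have hπ : (0:ℝ) < π * C / q := by positivity
    calc (∫ w, ‖K z w‖ ^ q) ^ (1/q)
        ≤ ((C * t ^ (-(d:ℝ)/2)) ^ q * (π * C * t / q) ^ ((d:ℝ)/2)) ^ (1/q) :=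
          Real.rpow_le_rpow h0 hA1 (by positivity)
      _ = C * (π * C / q) ^ ((d : ℝ) / (2 * q)) * t ^ (-(d:ℝ)/(2*p)) := by
          rw [Real.mul_rpow (by positivity) (by positivity),
            ← Real.rpow_mul hCt.le, mul_one_div, div_self hq0.ne', Real.rpow_one,
            ← Real.rpow_mul (by positivity),
            show π * C * t / q = (π * C / q) * t by ring,
            Real.mul_rpow hπ.le ht.le]
          have he : (d:ℝ)/2 * (1/q) = (d:ℝ)/(2*q) := by
            field_simp
          rw [he]
          have harith : -(d:ℝ)/2 + (d:ℝ)/(2*q) = -(d:ℝ)/(2*p) := by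
            have h := hpq.inv_add_inv_eq_one
            field_simp
            field_simp at h
            nlinarith [h]
          calc C * t ^ (-(d:ℝ)/2) * ((π * C / q) ^ ((d:ℝ)/(2*q)) * t ^ ((d:ℝ)/(2*q)))
              = C * (π * C / q) ^ ((d:ℝ)/(2*q)) *
                  (t ^ (-(d:ℝ)/2) * t ^ ((d:ℝ)/(2*q))) := by ring
            _ = C * (π * C / q) ^ ((d : ℝ) / (2 * q)) * t ^ (-(d:ℝ)/(2*p)) := by
                rw [← Real.rpow_add ht, harith]
  -- conclusion
  calc |(∫ z', K z z') - χ z| = |∫ w, K z w * (χ w - 1)| := by rw [key, abs_neg]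
    _ ≤ ∫ w, ‖K z w‖ * ‖χ w - 1‖ := by
        rw [← Real.norm_eq_abs]
        refine (norm_integral_le_integral_norm _).trans_eq ?_
        congr 1; funext w
        rw [norm_mul]
    _ ≤ (∫ w, ‖K z w‖ ^ q) ^ (1/q) * (∫ w, ‖χ w - 1‖ ^ p) ^ (1/p) := holder
    _ = (∫ w, ‖K z w‖ ^ q) ^ (1/q) * N := by rw [hB]
    _ ≤ C * (π * C / q) ^ ((d : ℝ) / (2 * q)) * t ^ (-(d:ℝ)/(2*p)) * N :=
        mul_le_mul_of_nonneg_right hA hN0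
    _ = C * (π * C / q) ^ ((d : ℝ) / (2 * q)) * t ^ (-(d : ℝ) / (2 * p)) * N := by
        norm_num
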